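/- If y ∈ ℕ satisfies y ≥ 2 and a₁ − d ≥ C(y,2) + 1 (where C(y,2) is the binomial coefficient y choose 2), then Q ≥ 1 and n_{Q−1} ≥ y + 2 − n_Q. -/

import Mathlib

private lemma two_mul_choose_two (m : ℕ) : 2 * m.choose 2 = m * (m - 1) := by
  rw [Nat.choose_two_right, Nat.mul_div_cancel']
  rcases m with _ | k
  · simp
  · have : 2 ∣ k * (k + 1) := (Nat.even_mul_succ_self k).two_dvd
    simpa [Nat.succ_sub_one, Nat.mul_comm] using this

private lemma card_lt_pairs (s : Finset ℕ) :
    ((s ×ˢ s).filter (fun p => p.1 < p.2)).card = s.card.choose 2 := by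
  rw [← Finset.card_powersetCard 2 s]
  apply Finset.card_bij (fun p _ => ({p.1, p.2} : Finset ℕ))
  · intro p hp
    simp only [Finset.mem_filter, Finset.mem_product] at hp
    rw [Finset.mem_powersetCard]
    refine ⟨?_, ?_⟩
    · intro x hx
      simp only [Finset.mem_insert, Finset.mem_singleton] at hx
      rcases hx with h | h
      · exact h ▸ hp.1.1
      · exact h ▸ hp.1.2
    · rw [Finset.card_insert_of_notMem (by simp; omega), Finset.card_singleton]
  · intro p hp q hq h
    simp only [Finset.mem_filter, Finset.mem_product] at hp hq
    have h1 : p.1 ∈ ({q.1, q.2} : Finset ℕ) := by rw [← h]; simp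
    have h2 : p.2 ∈ ({q.1, q.2} : Finset ℕ) := by rw [← h]; simp
    have h3 : q.1 ∈ ({p.1, p.2} : Finset ℕ) := by rw [h]; simp
    have h4 : q.2 ∈ ({p.1, p.2} : Finset ℕ) := by rw [h]; simp
    simp only [Finset.mem_insert, Finset.mem_singleton] at h1 h2 h3 h4
    have := hp.2; have := hq.2
    ext <;> omega
  · intro u hu
    rw [Finset.mem_powersetCard] at hu
    obtain ⟨x, y, hxy, rfl⟩ := Finset.card_eq_two.mp hu.2
    have hx : x ∈ s := hu.1 (by simp)
    have hy : y ∈ s := hu.1 (by simp)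
    rcases lt_or_gt_of_ne hxy with h | h
    · exact ⟨(x, y), by simp [Finset.mem_filter, hx, hy, h], rfl⟩
    · exact ⟨(y, x), by simp [Finset.mem_filter, hx, hy, h], (Finset.pair_comm y x)⟩

private lemma card_le_pairs (s : Finset ℕ) :
    ((s ×ˢ s).filter (fun p => p.1 ≤ p.2)).card ≤ s.card.choose 2 + s.card := by
  have hsplit : (s ×ˢ s).filter (fun p => p.1 ≤ p.2) =
      ((s ×ˢ s).filter (fun p => p.1 < p.2)) ∪ ((s ×ˢ s).filter (fun p => p.1 = p.2)) := by
    rw [← Finset.filter_or]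
    apply Finset.filter_congr
    intro p _
    omega
  have hdiag : ((s ×ˢ s).filter (fun p => p.1 = p.2)).card ≤ s.card := by
    apply Finset.card_le_card_of_injOn (fun p => p.1)
    · intro p hp
      simp only [Finset.mem_coe, Finset.mem_filter, Finset.mem_product] at hp
      exact hp.1.1
    · intro p hp q hq h
      simp only [Finset.coe_filter, Set.mem_setOf_eq, Finset.mem_product] at hp hq
      have := hp.2; have := hq.2
      have h' : p.1 = q.1 := h
      ext
      · exact h'
      · omega
  calc ((s ×ˢ s).filter (fun p => p.1 ≤ p.2)).card
      ≤ ((s ×ˢ s).filter (fun p => p.1 < p.2)).card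
        + ((s ×ˢ s).filter (fun p => p.1 = p.2)).card := by
        rw [hsplit]; exact Finset.card_union_le _ _
    _ ≤ s.card.choose 2 + s.card := by rw [card_lt_pairs]; omega

private lemma final_contra (s b q cy2 c2b y : ℤ)
    (I1 : cy2 + 2 ≤ s + b * q + c2b)
    (M1 : b * q + b * b + b ≤ b * y)
    (E9 : 2 * c2b + b = b * b)
    (E10 : 2 * cy2 + y = y * y)
    (F7 : s ≤ y) : False := by
  nlinarith [sq_nonneg (y - b - 1), sq_nonneg (y - b - 2)]

set_option maxHeartbeats 1000000 in
theorem stmt9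
    (d : ℕ) (hd : 2 ≤ d)
    (a : Fin d → ℕ)
    (ha_pos : ∀ i, 0 < a i)
    (ha_mono : StrictMono a)
    (ha_gcd : Finset.univ.gcd a = 1)
    (a1 : ℕ) (ha1 : a1 = a ⟨0, by omega⟩)
    (S : Set ℕ)
    (hS : S = {m : ℕ | ∃ c : Fin d → ℕ, m = ∑ i, c i * a i})
    (hmin : ∀ j : Fin d, ¬ ∃ c : Fin d → ℕ, c j = 0 ∧ a j = ∑ i, c i * a i)
    (F : ℕ) (hF : F ∉ S) (hFmax : ∀ m : ℕ, F < m → m ∈ S)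
    (Q R : ℕ) (hQR : F + 1 = Q * a1 + R) (hR2 : 2 ≤ R) (hRa : R ≤ a1)
    (I : ℕ → Set ℕ) (hI : ∀ k, I k = Set.Icc (k * a1) ((k + 1) * a1 - 1))
    (n : ℕ → ℕ) (hn : ∀ k, n k = (S ∩ Set.Icc 0 F ∩ I k).ncard)
    (y : ℕ) (hy : 2 ≤ y) (hyd : y.choose 2 + 1 ≤ a1 - d)
    :
    1 ≤ Q ∧ (y : ℤ) + 2 - (n Q : ℤ) ≤ (n (Q - 1) : ℤ) := by
  classical
  set i0 : Fin d := ⟨0, by omega⟩ with hi0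
  -- basic membership
  have hSmem : ∀ m : ℕ, m ∈ S ↔ ∃ c : Fin d → ℕ, m = ∑ i, c i * a i := by
    intro m; rw [hS]; exact Iff.rfl
  have ha1pos : 0 < a1 := ha1 ▸ ha_pos i0
  have had2 : d + 2 ≤ a1 := by
    have h1 : 0 < y.choose 2 := Nat.choose_pos hy
    omega
  have hS0 : (0 : ℕ) ∈ S := (hSmem 0).mpr ⟨fun _ => 0, by simp⟩
  have hSadd : ∀ u v : ℕ, u ∈ S → v ∈ S → u + v ∈ S := by
    intro u v hu hv
    obtain ⟨c, hc⟩ := (hSmem u).mp hu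
    obtain ⟨c', hc'⟩ := (hSmem v).mp hv
    exact (hSmem _).mpr ⟨c + c', by
      simp [hc, hc', add_mul, Finset.sum_add_distrib]⟩
  have hSgen : ∀ i : Fin d, a i ∈ S := by
    intro i
    refine (hSmem _).mpr ⟨Pi.single i 1, ?_⟩
    rw [Finset.sum_eq_single i]
    · simp
    · intro j _ hj; simp [Pi.single_eq_of_ne hj]
    · intro h; exact absurd (Finset.mem_univ i) h
  have hSmul : ∀ k : ℕ, k * a1 ∈ S := by
    intro k
    refine (hSmem _).mpr ⟨Pi.single i0 k, ?_⟩
    rw [Finset.sum_eq_single i0]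
    · rw [ha1, Pi.single_eq_same]
    · intro j _ hj; simp [Pi.single_eq_of_ne hj]
    · intro h; exact absurd (Finset.mem_univ i0) h
  have ha_le : ∀ i : Fin d, a1 ≤ a i := by
    intro i
    rw [ha1]
    exact ha_mono.monotone (show i0 ≤ i from Fin.le_def.mpr (Nat.zero_le _))
  have hgt : ∀ i : Fin d, i ≠ i0 → a1 < a i := by
    intro i hi
    rw [ha1]
    apply ha_mono
    simp only [Fin.lt_def]
    have : i.val ≠ 0 := fun h => hi (Fin.ext h)
    show (0:ℕ) < i.val; omega
  have hSlb : ∀ m : ℕ, m ∈ S → m ≠ 0 → a1 ≤ m := by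
    intro m hm hm0
    obtain ⟨c, hc⟩ := (hSmem m).mp hm
    have hne : ∑ i, c i * a i ≠ 0 := by rw [← hc]; exact hm0
    obtain ⟨j, -, hj⟩ := Finset.exists_ne_zero_of_sum_ne_zero hne
    have h1 : c j * a j ≤ m := hc ▸ Finset.single_le_sum (f := fun i => c i * a i)
      (fun _ _ => Nat.zero_le _) (Finset.mem_univ j)
    have h2 : 1 ≤ c j := by
      rcases Nat.eq_zero_or_pos (c j) with h | h
      · exact absurd (by simp [h] : c j * a j = 0) hj
      · exact h
    calc a1 ≤ a j := ha_le j
      _ ≤ c j * a j := Nat.le_mul_of_pos_left _ h2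
      _ ≤ m := h1
  -- peeling one generator from a representation
  have hpeel : ∀ (c : Fin d → ℕ) (i : Fin d), 1 ≤ c i →
      (∑ j, c j * a j = a i + ∑ j, (Function.update c i (c i - 1)) j * a j) ∧
      (∑ j, c j = 1 + ∑ j, (Function.update c i (c i - 1)) j) := by
    intro c i hci
    have e1 : ∑ j, c j * a j = c i * a i + ∑ j ∈ Finset.univ.erase i, c j * a j :=
      (Finset.add_sum_erase _ (fun j => c j * a j) (Finset.mem_univ i)).symm
    have e2 : ∑ j, (Function.update c i (c i - 1)) j * a j
        = (c i - 1) * a i + ∑ j ∈ Finset.univ.erase i, c j * a j := by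
      rw [← Finset.add_sum_erase _ (fun j => (Function.update c i (c i - 1)) j * a j)
        (Finset.mem_univ i), Function.update_self]
      congr 1
      apply Finset.sum_congr rfl
      intro j hj
      rw [Function.update_of_ne (Finset.ne_of_mem_erase hj)]
    have e3 : ∑ j, c j = c i + ∑ j ∈ Finset.univ.erase i, c j :=
      (Finset.add_sum_erase _ c (Finset.mem_univ i)).symm
    have e4 : ∑ j, (Function.update c i (c i - 1)) j
        = (c i - 1) + ∑ j ∈ Finset.univ.erase i, c j := by
      rw [← Finset.add_sum_erase _ (Function.update c i (c i - 1)) (Finset.mem_univ i),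
        Function.update_self]
      congr 1
      apply Finset.sum_congr rfl
      intro j hj
      rw [Function.update_of_ne (Finset.ne_of_mem_erase hj)]
    obtain ⟨k, hk⟩ : ∃ k, c i = k + 1 := ⟨c i - 1, by omega⟩
    constructor
    · rw [e1, e2, hk]
      simp only [Nat.add_sub_cancel]
      ring
    · rw [e3, e4, hk]
      simp only [Nat.add_sub_cancel]
      omega
  -- the key structure lemma
  have hstep : ∀ m : ℕ, m ∈ S → m ≠ 0 →
      (a1 ≤ m ∧ m - a1 ∈ S) ∨
      (∃ i, i ≠ i0 ∧ a i = m) ∨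
      (∃ i t, i ≠ i0 ∧ t ∈ S ∧ t ≠ 0 ∧ m = a i + t) := by
    intro m hm hm0
    obtain ⟨c, hc⟩ := (hSmem m).mp hm
    by_cases h0 : c i0 = 0
    · have hT : ∑ j, c j ≠ 0 := by
        intro h
        apply hm0
        rw [hc]
        apply Finset.sum_eq_zero
        intro j hj
        have : c j = 0 := by
          have := (Finset.sum_eq_zero_iff).mp h j hj
          exact this
        simp [this]
      obtain ⟨i, -, hi⟩ := Finset.exists_ne_zero_of_sum_ne_zero hT
      have hii0 : i ≠ i0 := fun h => hi (h ▸ h0)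
      have hci1 : 1 ≤ c i := Nat.one_le_iff_ne_zero.mpr hi
      obtain ⟨hpa, hpt⟩ := hpeel c i hci1
      by_cases hT1 : ∑ j, (Function.update c i (c i - 1)) j = 0
      · -- m = a i
        right; left
        refine ⟨i, hii0, ?_⟩
        rw [hc, hpa]
        have : ∑ j, (Function.update c i (c i - 1)) j * a j = 0 := by
          apply Finset.sum_eq_zero
          intro j hj
          have : (Function.update c i (c i - 1)) j = 0 :=
            (Finset.sum_eq_zero_iff).mp hT1 j hj
          simp [this]
        omega
      · -- m = a i + t with t ≠ 0
        right; right
        set c' := Function.update c i (c i - 1) with hc'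
        refine ⟨i, ∑ j, c' j * a j, hii0, (hSmem _).mpr ⟨c', rfl⟩, ?_, by rw [hc, hpa]⟩
        obtain ⟨j, -, hj⟩ := Finset.exists_ne_zero_of_sum_ne_zero hT1
        intro hzero
        have hz := Finset.sum_eq_zero_iff.mp hzero j (Finset.mem_univ j)
        have hap := ha_pos j
        apply hj
        rcases Nat.eq_zero_or_pos (c' j) with h | h
        · exact h
        · exfalso; nlinarith
    · -- c i0 ≥ 1 : m - a1 ∈ S
      left
      have hci1 : 1 ≤ c i0 := Nat.one_le_iff_ne_zero.mpr h0
      obtain ⟨hpa, _⟩ := hpeel c i0 hci1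
      have ha1i : a i0 = a1 := ha1.symm
      have hm' : m = a1 + ∑ j, (Function.update c i0 (c i0 - 1)) j * a j := by
        rw [hc, hpa, ha1i]
      constructor
      · omega
      · have : m - a1 = ∑ j, (Function.update c i0 (c i0 - 1)) j * a j := by omega
        exact (hSmem _).mpr ⟨_, this⟩
  -- minimal generators minus a1 are not in S
  have hgenap : ∀ i : Fin d, i ≠ i0 → a i - a1 ∉ S := by
    intro i hi hmem
    obtain ⟨c, hc⟩ := (hSmem _).mp hmem
    have hlt : a1 < a i := hgt i hi
    have heq : a i = a1 + ∑ j, c j * a j := by omega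
    by_cases hci : c i = 0
    · apply hmin i
      set c' := Function.update c i0 (c i0 + 1) with hc'
      have h1 : 1 ≤ c' i0 := by rw [hc', Function.update_self]; omega
      obtain ⟨hpa, _⟩ := hpeel c' i0 h1
      have h2 : Function.update c' i0 (c' i0 - 1) = c := by
        rw [hc', Function.update_self, Nat.add_sub_cancel, Function.update_idem,
          Function.update_eq_self]
      refine ⟨c', ?_, ?_⟩
      · rw [hc', Function.update_of_ne hi]
        exact hci
      · rw [hpa, h2, ← ha1]
        omega
    · have h1 : 1 ≤ c i := Nat.one_le_iff_ne_zero.mpr hci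
      have h2 : a i ≤ ∑ j, c j * a j := by
        calc a i ≤ c i * a i := Nat.le_mul_of_pos_left _ h1
          _ ≤ ∑ j, c j * a j := Finset.single_le_sum (f := fun j => c j * a j)
            (fun _ _ => Nat.zero_le _) (Finset.mem_univ i)
      omega
  -- Q ≥ 1
  have hQ1 : 1 ≤ Q := by
    by_contra hQ0
    have hQ0' : Q = 0 := by omega
    have hFR : F + 1 = R := by rw [hQR, hQ0']; ring
    -- every a1 + k for 1 ≤ k ≤ a1 - 1 is a minimal generator ≠ a1
    have hP : ∀ k ∈ Finset.Icc 1 (a1 - 1), ∃ i, i ≠ i0 ∧ a i = a1 + k := by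
      intro k hk
      rw [Finset.mem_Icc] at hk
      have hmem : a1 + k ∈ S := hFmax _ (by omega)
      rcases hstep (a1 + k) hmem (by omega) with ⟨_, h⟩ | h | ⟨i, t, hi, htS, ht0, hsum⟩
      · have : a1 + k - a1 = k := by omega
        rw [this] at h
        have := hSlb k h (by omega)
        omega
      · exact h
      · exfalso
        have h1 := hgt i hi
        have h2 := hSlb t htS ht0
        omega
    set f : ℕ → Fin d := fun k => if h : ∃ i, i ≠ i0 ∧ a i = a1 + k then h.choose else i0
      with hf
    have hcard : (Finset.Icc 1 (a1 - 1)).card ≤ (Finset.univ.erase i0).card := by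
      apply Finset.card_le_card_of_injOn f
      · intro k hk
        have h := hP k hk
        rw [hf]
        simp only [dif_pos h]
        exact Finset.mem_erase.mpr ⟨h.choose_spec.1, Finset.mem_univ _⟩
      · intro k hk k' hk' heq
        have h := hP k (by simpa using hk)
        have h' := hP k' (by simpa using hk')
        rw [hf] at heq
        simp only [dif_pos h, dif_pos h'] at heq
        have e1 := h.choose_spec.2
        have e2 := h'.choose_spec.2
        rw [heq, e2] at e1
        omega
    rw [Nat.card_Icc, Finset.card_erase_of_mem (Finset.mem_univ _), Finset.card_univ,
      Fintype.card_fin] at hcard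
    omega
  refine ⟨hQ1, ?_⟩
  by_contra hcon
  push_neg at hcon
  have hcon' : n (Q - 1) + n Q ≤ y + 1 := by omega
  obtain ⟨Q', rfl⟩ : ∃ Q', Q = Q' + 1 := ⟨Q - 1, by omega⟩
  simp only [Nat.add_sub_cancel] at hcon'
  have hmul1 : (Q' + 1) * a1 = Q' * a1 + a1 := by ring
  have hmul2 : (Q' + 2) * a1 = Q' * a1 + a1 + a1 := by ring
  have hFv : F + 1 = Q' * a1 + a1 + R := by omega
  -- finite sets computing n k
  have hnk : ∀ k : ℕ, n k =
      ((Finset.Icc (k * a1) ((k + 1) * a1 - 1)).filter (fun m => m ∈ S ∧ m ≤ F)).card := by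
    intro k
    rw [hn, hI]
    have hset : S ∩ Set.Icc 0 F ∩ Set.Icc (k * a1) ((k + 1) * a1 - 1)
        = ((Finset.Icc (k * a1) ((k + 1) * a1 - 1)).filter
            (fun m => m ∈ S ∧ m ≤ F) : Finset ℕ) := by
      ext m
      simp only [Set.mem_inter_iff, Set.mem_Icc, Finset.coe_filter, Set.mem_setOf_eq,
        Finset.mem_Icc]
      constructor
      · rintro ⟨⟨h1, _, h2⟩, h3, h4⟩; exact ⟨⟨h3, h4⟩, h1, h2⟩
      · rintro ⟨⟨h3, h4⟩, h1, h2⟩; exact ⟨⟨h1, Nat.zero_le _, h2⟩, h3, h4⟩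
    rw [hset, Set.ncard_coe_finset]
  set W : Finset ℕ := Finset.Icc (Q' * a1 + R) F with hW
  set SW : Finset ℕ := W.filter (fun t => t ∈ S) with hSW
  set Gps : Finset ℕ := W.filter (fun t => t ∉ S) with hGps
  have hWcard : W.card = a1 := by rw [hW, Nat.card_Icc]; omega
  have hGcard : SW.card + Gps.card = a1 := by
    rw [← hWcard, hSW, hGps]
    exact Finset.card_filter_add_card_filter_not (s := W) (p := fun t => t ∈ S)
  have hmul2' : (Q' + 1 + 1) * a1 = Q' * a1 + a1 + a1 := by ring
  have hsy : SW.card ≤ y := by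
    have hsub : insert (Q' * a1) SW ⊆
        ((Finset.Icc (Q' * a1) ((Q' + 1) * a1 - 1)).filter (fun m => m ∈ S ∧ m ≤ F)) ∪
        ((Finset.Icc ((Q' + 1) * a1) ((Q' + 1 + 1) * a1 - 1)).filter
          (fun m => m ∈ S ∧ m ≤ F)) := by
      intro t ht
      rcases Finset.mem_insert.mp ht with rfl | ht
      · apply Finset.mem_union_left
        rw [Finset.mem_filter, Finset.mem_Icc]
        exact ⟨⟨le_refl _, by omega⟩, hSmul Q', by omega⟩
      · rw [hSW, Finset.mem_filter, hW, Finset.mem_Icc] at ht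
        obtain ⟨⟨h1, h2⟩, h3⟩ := ht
        by_cases hc2 : t ≤ (Q' + 1) * a1 - 1
        · apply Finset.mem_union_left
          rw [Finset.mem_filter, Finset.mem_Icc]
          exact ⟨⟨by omega, hc2⟩, h3, h2⟩
        · apply Finset.mem_union_right
          rw [Finset.mem_filter, Finset.mem_Icc]
          exact ⟨⟨by omega, by omega⟩, h3, h2⟩
    have hnot : Q' * a1 ∉ SW := by
      rw [hSW, Finset.mem_filter, hW, Finset.mem_Icc]
      rintro ⟨⟨h1, _⟩, _⟩
      omega
    have h1 : SW.card + 1 ≤ n Q' + n (Q' + 1) := by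
      rw [hnk Q', hnk (Q' + 1)]
      calc SW.card + 1 = (insert (Q' * a1) SW).card :=
            (Finset.card_insert_of_notMem hnot).symm
        _ ≤ _ := Finset.card_le_card hsub
        _ ≤ _ := Finset.card_union_le _ _
    omega
  set J : Finset ℕ := Gps.image (fun t => t + a1) with hJ
  have hJcard : J.card = Gps.card := Finset.card_image_of_injective _ (add_left_injective a1)
  have hJmem : ∀ j ∈ J, j ∈ S ∧ a1 ≤ j ∧ j - a1 ∉ S ∧ F < j ∧ j ≤ F + a1 := by
    intro j hj
    rw [hJ, Finset.mem_image] at hj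
    obtain ⟨g, hg, rfl⟩ := hj
    rw [hGps, Finset.mem_filter, hW, Finset.mem_Icc] at hg
    obtain ⟨⟨h1, h2⟩, h3⟩ := hg
    have hgt' : F < g + a1 := by omega
    exact ⟨hFmax _ hgt', by omega, by simpa using h3, hgt', by omega⟩
  set B : Finset ℕ := (Finset.Icc (a1 + 1) F).filter (fun t => t ∈ S ∧ t - a1 ∉ S) with hB
  have hBJ : B.card + J.card + 1 ≤ a1 := by
    have hkey : ∀ x ∈ insert 0 (B ∪ J), x ∈ S ∧ (x ≠ 0 → a1 ≤ x ∧ x - a1 ∉ S) := by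
      intro x hx
      rcases Finset.mem_insert.mp hx with rfl | hx
      · exact ⟨hS0, fun h => absurd rfl h⟩
      rcases Finset.mem_union.mp hx with hx | hx
      · rw [hB, Finset.mem_filter, Finset.mem_Icc] at hx
        exact ⟨hx.2.1, fun _ => ⟨by omega, hx.2.2⟩⟩
      · obtain ⟨h1, h2, h3, _, _⟩ := hJmem x hx
        exact ⟨h1, fun _ => ⟨h2, h3⟩⟩
    have haux : ∀ x ∈ insert 0 (B ∪ J), ∀ z ∈ insert 0 (B ∪ J),
        x < z → x % a1 = z % a1 → False := by
      intro x hx z hz hlt hmod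
      obtain ⟨hxS, _⟩ := hkey x hx
      obtain ⟨_, hz2⟩ := hkey z hz
      obtain ⟨hza, hzna⟩ := hz2 (by omega)
      have hdvd : a1 ∣ z - x := (Nat.modEq_iff_dvd' (le_of_lt hlt)).mp hmod
      obtain ⟨k, hk⟩ := hdvd
      have hk0 : k ≠ 0 := by rintro rfl; omega
      obtain ⟨k', rfl⟩ : ∃ k', k = k' + 1 := ⟨k - 1, by omega⟩
      have hzz : z - a1 = x + a1 * k' := by
        have : a1 * (k' + 1) = a1 * k' + a1 := by ring
        omega
      apply hzna
      rw [hzz]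
      exact hSadd _ _ hxS (by simpa [mul_comm] using hSmul k')
    have hc1 : (insert 0 (B ∪ J)).card ≤ (Finset.range a1).card := by
      apply Finset.card_le_card_of_injOn (fun x => x % a1)
      · intro x _; exact Finset.mem_range.mpr (Nat.mod_lt _ ha1pos)
      · intro x hx z hz hmod
        by_contra hne
        rcases lt_or_gt_of_ne hne with h | h
        · exact haux x (Finset.mem_coe.mp hx) z (Finset.mem_coe.mp hz) h hmod
        · exact haux z (Finset.mem_coe.mp hz) x (Finset.mem_coe.mp hx) h hmod.symm
    have h0B : (0 : ℕ) ∉ B ∪ J := by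
      rw [Finset.mem_union]
      push_neg
      constructor
      · rw [hB, Finset.mem_filter, Finset.mem_Icc]
        rintro ⟨⟨h1, _⟩, _⟩
        omega
      · intro h
        have := (hJmem 0 h).2.2.2.1
        omega
    have hdisjBJ : Disjoint B J := by
      rw [Finset.disjoint_left]
      intro t htB htJ
      rw [hB, Finset.mem_filter, Finset.mem_Icc] at htB
      have := (hJmem t htJ).2.2.2.1
      omega
    rw [Finset.card_insert_of_notMem h0B, Finset.card_union_of_disjoint hdisjBJ,
      Finset.card_range] at hc1
    omega
  set BG : Finset ℕ := B.filter (fun t => ∃ i, i ≠ i0 ∧ a i = t) with hBG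
  set JG : Finset ℕ := J.filter (fun t => ∃ i, i ≠ i0 ∧ a i = t) with hJG
  have hdisjBJ2 : Disjoint JG BG := by
    rw [Finset.disjoint_left]
    intro t htJ htB
    rw [hJG, Finset.mem_filter] at htJ
    rw [hBG, Finset.mem_filter, hB, Finset.mem_filter, Finset.mem_Icc] at htB
    have := (hJmem t htJ.1).2.2.2.1
    omega
  have hJGBG : JG.card + BG.card + 1 ≤ d := by
    have hprop : ∀ t ∈ JG ∪ BG, ∃ i, i ≠ i0 ∧ a i = t := by
      intro t ht
      rcases Finset.mem_union.mp ht with h | h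
      · rw [hJG] at h
        exact (Finset.mem_filter.mp h).2
      · rw [hBG] at h
        exact (Finset.mem_filter.mp h).2
    have hcard2 : (JG ∪ BG).card ≤ (Finset.univ.erase i0).card := by
      apply Finset.card_le_card_of_injOn
        (fun t => if h : ∃ i, i ≠ i0 ∧ a i = t then h.choose else i0)
      · intro t ht
        have hp := hprop t ht
        simp only [dif_pos hp]
        exact Finset.mem_erase.mpr ⟨hp.choose_spec.1, Finset.mem_univ _⟩
      · intro t ht t' ht' heq
        have hp := hprop t (Finset.mem_coe.mp ht)
        have hp' := hprop t' (Finset.mem_coe.mp ht')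
        simp only [dif_pos hp, dif_pos hp'] at heq
        rw [← hp.choose_spec.2, ← hp'.choose_spec.2, heq]
    rw [Finset.card_union_of_disjoint hdisjBJ2,
      Finset.card_erase_of_mem (Finset.mem_univ _), Finset.card_univ,
      Fintype.card_fin] at hcard2
    omega
  have hdec : ∀ j ∈ J, j ∉ JG → ∃ u v : ℕ, u ∈ BG ∧ v ∈ B ∧ j = u + v := by
    intro j hj hjn
    obtain ⟨hjS, hja1, hjna, hjF, hjFa⟩ := hJmem j hj
    rcases hstep j hjS (by omega) with ⟨_, h⟩ | ⟨i, hi, hai⟩ | ⟨i, t, hi, htS, ht0, hsum⟩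
    · exact absurd h hjna
    · exact absurd (by rw [hJG]; exact Finset.mem_filter.mpr ⟨hj, ⟨i, hi, hai⟩⟩) hjn
    · have hgti := hgt i hi
      have hta1 : a1 ≤ t := hSlb t htS ht0
      have haiF : a i ≤ F := by omega
      have htne : t ≠ a1 := by
        intro hteq
        apply hjna
        rw [hteq] at hsum
        have h' : j - a1 = a i := by omega
        rw [h']
        exact hSgen i
      have htF : t ≤ F := by omega
      have htna : t - a1 ∉ S := by
        intro hmem
        apply hjna
        have heq : j - a1 = a i + (t - a1) := by omega
        rw [heq]
        exact hSadd _ _ (hSgen i) hmem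
      refine ⟨a i, t, ?_, ?_, hsum⟩
      · rw [hBG, Finset.mem_filter, hB, Finset.mem_filter, Finset.mem_Icc]
        exact ⟨⟨⟨by omega, haiF⟩, hSgen i, hgenap i hi⟩, ⟨i, hi, rfl⟩⟩
      · rw [hB, Finset.mem_filter, Finset.mem_Icc]
        exact ⟨⟨by omega, htF⟩, htS, htna⟩
  have hJGsub : JG ⊆ J := by rw [hJG]; exact Finset.filter_subset _ _
  have hBGsub : BG ⊆ B := by rw [hBG]; exact Finset.filter_subset _ _
  set V1 : Finset ℕ := (BG ×ˢ (B \ BG)).image (fun p => p.1 + p.2) with hV1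
  set V2 : Finset ℕ := ((BG ×ˢ BG).filter (fun p => p.1 ≤ p.2)).image
    (fun p => p.1 + p.2) with hV2
  have hsdV : J \ JG ⊆ V1 ∪ V2 := by
    intro j hjm
    rw [Finset.mem_sdiff] at hjm
    obtain ⟨u, v, huBG, hvB, rfl⟩ := hdec j hjm.1 hjm.2
    by_cases hvBG : v ∈ BG
    · rcases le_total u v with h | h
      · apply Finset.mem_union_right
        rw [hV2, Finset.mem_image]
        exact ⟨(u, v), Finset.mem_filter.mpr ⟨Finset.mem_product.mpr ⟨huBG, hvBG⟩, h⟩, rfl⟩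
      · apply Finset.mem_union_right
        rw [hV2, Finset.mem_image]
        exact ⟨(v, u), Finset.mem_filter.mpr ⟨Finset.mem_product.mpr ⟨hvBG, huBG⟩, h⟩,
          by simp [Nat.add_comm]⟩
    · apply Finset.mem_union_left
      rw [hV1, Finset.mem_image]
      exact ⟨(u, v), Finset.mem_product.mpr ⟨huBG, Finset.mem_sdiff.mpr ⟨hvB, hvBG⟩⟩, rfl⟩
  have c1 : (J \ JG).card + JG.card = J.card := Finset.card_sdiff_add_card_eq_card hJGsub
  have c2 : (J \ JG).card ≤ V1.card + V2.card :=
    le_trans (Finset.card_le_card hsdV) (Finset.card_union_le _ _)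
  have c3 : V1.card ≤ BG.card * (B \ BG).card := by
    calc V1.card ≤ (BG ×ˢ (B \ BG)).card := Finset.card_image_le
      _ = _ := Finset.card_product _ _
  have c4 : V2.card ≤ BG.card.choose 2 + BG.card :=
    le_trans Finset.card_image_le (card_le_pairs BG)
  have c5 : (B \ BG).card + BG.card = B.card := Finset.card_sdiff_add_card_eq_card hBGsub
  -- final arithmetic
  have e9 : 2 * BG.card.choose 2 + BG.card = BG.card * BG.card := by
    have h1 := two_mul_choose_two BG.card
    have h2 : BG.card * (BG.card - 1) + BG.card = BG.card * BG.card := by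
      cases BG.card with
      | zero => simp
      | succ k => simp only [Nat.succ_sub_one]; ring
    linarith
  have e10 : 2 * y.choose 2 + y = y * y := by
    have h1 := two_mul_choose_two y
    have h2 : y * (y - 1) + y = y * y := by
      cases y with
      | zero => simp
      | succ k => simp only [Nat.succ_sub_one]; ring
    linarith
  have f8 : d + y.choose 2 + 1 ≤ a1 := by omega
  have L1 : (B \ BG).card + BG.card + 1 ≤ SW.card := by omega
  have i1 : y.choose 2 + 2 ≤ SW.card + BG.card * (B \ BG).card + BG.card.choose 2 := by
    linarith
  have M1 : BG.card * (B \ BG).card + BG.card * BG.card + BG.card ≤ BG.card * y := by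
    have hby : (B \ BG).card + BG.card + 1 ≤ y := by omega
    calc BG.card * (B \ BG).card + BG.card * BG.card + BG.card
        = BG.card * ((B \ BG).card + BG.card + 1) := by ring
      _ ≤ BG.card * y := Nat.mul_le_mul_left _ hby
  have I1 : (y.choose 2 : ℤ) + 2 ≤ (SW.card : ℤ) + (BG.card : ℤ) * ((B \ BG).card : ℤ)
      + (BG.card.choose 2 : ℤ) := by exact_mod_cast i1
  have M1' : (BG.card : ℤ) * ((B \ BG).card : ℤ) + (BG.card : ℤ) * (BG.card : ℤ)
      + (BG.card : ℤ) ≤ (BG.card : ℤ) * (y : ℤ) := by exact_mod_cast M1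
  have E9 : 2 * (BG.card.choose 2 : ℤ) + (BG.card : ℤ) = (BG.card : ℤ) * (BG.card : ℤ) := by
    exact_mod_cast e9
  have E10 : 2 * (y.choose 2 : ℤ) + (y : ℤ) = (y : ℤ) * (y : ℤ) := by exact_mod_cast e10
  have F7 : (SW.card : ℤ) ≤ (y : ℤ) := by exact_mod_cast hsy
  exact final_contra _ _ _ _ _ _ I1 M1' E9 E10 F7
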